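/- The function f(u) = log₂((2+u)/(1+u)) + log₂((4+3u)/(3+3u)) − log₂((4+u)/(3+u)) satisfies f(0) = 1, f is strictly decreasing on [0,∞), and f(u) → 0 as u → ∞. -/

import Mathlib

noncomputable def ehllF (u : ℝ) : ℝ :=
  Real.logb 2 ((2 + u) / (1 + u)) + Real.logb 2 ((4 + 3 * u) / (3 + 3 * u))
    - Real.logb 2 ((4 + u) / (3 + u))

lemma ehllF_eq {u : ℝ} (hu : 0 ≤ u) :
    ehllF u = Real.logb 2 (((2 + u) * (4 + 3 * u) * (3 + u)) /
      ((1 + u) * (3 + 3 * u) * (4 + u))) := by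
  unfold ehllF
  rw [Real.logb_div (by positivity) (by positivity),
    Real.logb_div (by positivity) (by positivity),
    Real.logb_div (by positivity) (by positivity),
    Real.logb_div (by positivity) (by positivity),
    Real.logb_mul (by positivity) (by positivity),
    Real.logb_mul (by positivity) (by positivity),
    Real.logb_mul (by positivity) (by positivity),
    Real.logb_mul (by positivity) (by positivity)]
  ring

theorem ehllF_properties :
    ehllF 0 = 1 ∧ StrictAntiOn ehllF (Set.Ici (0 : ℝ)) ∧
      Filter.Tendsto ehllF Filter.atTop (nhds 0) := by
  refine ⟨?_, ?_, ?_⟩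
  · unfold ehllF
    norm_num
  · intro a ha b hb hab
    simp only [Set.mem_Ici] at ha hb
    rw [ehllF_eq ha, ehllF_eq hb]
    apply Real.logb_lt_logb one_lt_two (by positivity)
    rw [div_lt_div_iff₀ (by positivity) (by positivity)]
    have h := sub_pos.2 hab
    have key : (2 + a) * (4 + 3 * a) * (3 + a) * ((1 + b) * (3 + 3 * b) * (4 + b)) -
        (2 + b) * (4 + 3 * b) * (3 + b) * ((1 + a) * (3 + 3 * a) * (4 + a)) =
        (b - a) * (192 + 204 * (a + b) + 36 * (a ^ 2 + a * b + b ^ 2) + 171 * (a * b)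
          + 33 * (a * b * (a + b)) + 3 * (a ^ 2 * b ^ 2)) := by ring
    have hpos : 0 < (b - a) * (192 + 204 * (a + b) + 36 * (a ^ 2 + a * b + b ^ 2)
        + 171 * (a * b) + 33 * (a * b * (a + b)) + 3 * (a ^ 2 * b ^ 2)) := by
      apply mul_pos h
      nlinarith [mul_nonneg ha hb, mul_nonneg (mul_nonneg ha hb) (add_nonneg ha hb),
        mul_nonneg (mul_nonneg ha ha) (mul_nonneg hb hb), sq_nonneg a, sq_nonneg b]
    linarith [key ▸ hpos]
  · have key : ∀ a b c : ℝ, 0 < c →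
        Filter.Tendsto (fun u : ℝ => Real.logb 2 ((a + c * u) / (b + c * u)))
          Filter.atTop (nhds 0) := by
      intro a b c hc
      have hden : Filter.Tendsto (fun u : ℝ => b + c * u) Filter.atTop Filter.atTop :=
        Filter.tendsto_atTop_add_const_left _ b
          (Filter.Tendsto.const_mul_atTop hc Filter.tendsto_id)
      have h2 : Filter.Tendsto (fun u : ℝ => 1 + (a - b) * (b + c * u)⁻¹)
          Filter.atTop (nhds 1) := by
        have h3 := (tendsto_inv_atTop_zero.comp hden).const_mul (a - b)
        have h4 := (tendsto_const_nhds (x := (1 : ℝ)) (f := (Filter.atTop : Filter ℝ))).add h3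
        simpa using h4
      have h1 : Filter.Tendsto (fun u : ℝ => (a + c * u) / (b + c * u))
          Filter.atTop (nhds 1) := by
        refine h2.congr' ?_
        filter_upwards [hden.eventually_gt_atTop 0] with u hu
        field_simp
        ring
      have hlog : Filter.Tendsto (Real.logb 2) (nhds 1) (nhds 0) := by
        have := (Real.continuousAt_logb (b := 2) (one_ne_zero)).tendsto
        simpa using this
      exact hlog.comp h1
    have t1 := key 2 1 1 one_pos
    have t2 := key 4 3 3 (by norm_num)
    have t3 := key 4 3 1 one_pos
    simp only [one_mul] at t1 t2 t3
    have := (t1.add t2).sub t3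
    simp only [add_zero, sub_zero] at this
    exact this
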